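/- For every x ∈ ℝ: ∫₀¹ u γ(xu) du ≤ (1/2) γ(2x/3). -/

import Mathlib

open scoped BigOperators

private lemma key_int (c : ℝ) (hc : 0 ≤ c) :
    (∫ u in (0:ℝ)..1, u * min 1 (c * u)) ≤ 1 / 2 * min 1 (2 * c / 3) := by
  have hcont : Continuous (fun u : ℝ => u * min 1 (c * u)) :=
    continuous_id.mul (continuous_const.min (continuous_const.mul continuous_id))
  rcases le_or_gt c (3/2) with h | h
  · have hmin : min 1 (2*c/3) = 2*c/3 := min_eq_right (by linarith)
    have h2 : (∫ u in (0:ℝ)..1, u * min 1 (c*u)) ≤ ∫ u in (0:ℝ)..1, c * u^2 := by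
      apply intervalIntegral.integral_mono_on (by norm_num) (hcont.intervalIntegrable _ _)
        ((continuous_const.mul (continuous_pow 2)).intervalIntegrable _ _)
      intro u hu
      have h1 := hu.1
      have hm := min_le_right (1:ℝ) (c*u)
      show u * min 1 (c * u) ≤ c * u ^ 2
      nlinarith
    have h3 : (∫ u in (0:ℝ)..1, c * u^2) = c/3 := by
      rw [intervalIntegral.integral_const_mul, integral_pow]; norm_num; ring
    rw [hmin]; rw [h3] at h2; linarith
  · have hmin : min 1 (2*c/3) = 1 := min_eq_left (by linarith)
    have h2 : (∫ u in (0:ℝ)..1, u * min 1 (c*u)) ≤ ∫ u in (0:ℝ)..1, u := by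
      apply intervalIntegral.integral_mono_on (by norm_num) (hcont.intervalIntegrable _ _)
        (continuous_id.intervalIntegrable _ _)
      intro u hu
      have h1 := hu.1
      have hm := min_le_left (1:ℝ) (c*u)
      simp only [id_eq]
      nlinarith
    have h3 : (∫ u in (0:ℝ)..1, (u:ℝ)) = 1/2 := by
      rw [integral_id]; norm_num
    rw [hmin]; rw [h3] at h2; linarith

/-- `∫₀¹ u γ(xu) du ≤ (1/2) γ(2x/3)`. -/
theorem stmt_9
    (n : ℕ) (hn : 2 ≤ n) (a : Fin n → Fin n → ℝ)
    (b : Fin n → Fin n → Fin n → Fin n → ℝ)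
    (hb : ∀ j k r s, b j k r s = a j r - a k r - a j s + a k s)
    (γ : ℝ → ℝ)
    (hγ : ∀ x, γ x = (∑ j, ∑ k, ∑ r, ∑ s,
      if j ≠ k ∧ r ≠ s then (b j k r s) ^ 2 * min 1 |x * b j k r s| else 0)
      / ((n : ℝ) ^ 2 * ((n : ℝ) - 1)))
    (x : ℝ) :
    (∫ u in (0:ℝ)..1, u * γ (x * u)) ≤ 1 / 2 * γ (2 * x / 3) := by
  have hn' : (2:ℝ) ≤ (n:ℝ) := by exact_mod_cast hn
  set D : ℝ := (n:ℝ)^2 * ((n:ℝ)-1) with hDdef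
  have hD : 0 < D := by
    apply mul_pos
    · nlinarith
    · linarith
  set F : Fin n → Fin n → Fin n → Fin n → ℝ → ℝ :=
    fun j k r s u => u * (if j ≠ k ∧ r ≠ s then
      (b j k r s) ^ 2 * min 1 |x * u * b j k r s| else 0) with hF
  have hcont : ∀ j k r s : Fin n, Continuous (F j k r s) := by
    intro j k r s
    by_cases hP : j ≠ k ∧ r ≠ s
    · simp only [hF, if_pos hP]
      exact continuous_id.mul (continuous_const.mul (continuous_const.min
        (((continuous_const.mul continuous_id).mul continuous_const).abs))
        )
    · simp only [hF, if_neg hP, mul_zero]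
      exact continuous_const
  -- termwise inequality
  have hterm : ∀ j k r s : Fin n,
      (∫ u in (0:ℝ)..1, F j k r s u)
        ≤ 1/2 * (if j ≠ k ∧ r ≠ s then
            (b j k r s) ^ 2 * min 1 |2 * x / 3 * b j k r s| else 0) := by
    intro j k r s
    by_cases hP : j ≠ k ∧ r ≠ s
    · simp only [hF, if_pos hP]
      set B := b j k r s with hB
      have hre : (∫ u in (0:ℝ)..1, u * (B^2 * min 1 |x * u * B|))
          = B^2 * ∫ u in (0:ℝ)..1, u * min 1 (|x*B| * u) := by
        rw [← intervalIntegral.integral_const_mul]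
        apply intervalIntegral.integral_congr
        intro u hu
        rw [Set.uIcc_of_le (by norm_num : (0:ℝ) ≤ 1)] at hu
        have hu0 : 0 ≤ u := hu.1
        have habs : |x * u * B| = |x*B| * u := by
          rw [show x*u*B = (x*B)*u by ring, abs_mul, abs_of_nonneg hu0]
        simp only [habs]; ring
      rw [hre]
      have h2 : |2*x/3*B| = 2 * |x*B| / 3 := by
        rw [show 2*x/3*B = (2/3)*(x*B) by ring, abs_mul,
          abs_of_nonneg (by norm_num : (0:ℝ) ≤ 2/3)]
        ring
      rw [h2]
      have hk := key_int |x*B| (abs_nonneg _)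
      have hB2 : (0:ℝ) ≤ B^2 := sq_nonneg B
      nlinarith [hk, hB2, mul_le_mul_of_nonneg_left hk hB2]
    · simp only [hF, if_neg hP, mul_zero]
      simp
  -- rewrite the integral as sum of integrals over D
  have hrw : ∀ u : ℝ, u * γ (x*u) = (∑ j, ∑ k, ∑ r, ∑ s, F j k r s u) / D := by
    intro u
    rw [hγ, ← mul_div_assoc]
    congr 1
    simp only [hF, Finset.mul_sum]
  have hswap : (∫ u in (0:ℝ)..1, ∑ j, ∑ k, ∑ r, ∑ s, F j k r s u)
      = ∑ j, ∑ k, ∑ r, ∑ s, ∫ u in (0:ℝ)..1, F j k r s u := by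
    rw [intervalIntegral.integral_finset_sum (fun j _ =>
      ((continuous_finset_sum _ fun k _ => continuous_finset_sum _ fun r _ =>
        continuous_finset_sum _ fun s _ => hcont j k r s).intervalIntegrable _ _))]
    refine Finset.sum_congr rfl fun j _ => ?_
    rw [intervalIntegral.integral_finset_sum (fun k _ =>
      ((continuous_finset_sum _ fun r _ =>
        continuous_finset_sum _ fun s _ => hcont j k r s).intervalIntegrable _ _))]
    refine Finset.sum_congr rfl fun k _ => ?_
    rw [intervalIntegral.integral_finset_sum (fun r _ =>
      ((continuous_finset_sum _ fun s _ => hcont j k r s).intervalIntegrable _ _))]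
    refine Finset.sum_congr rfl fun r _ => ?_
    rw [intervalIntegral.integral_finset_sum (fun s _ =>
      ((hcont j k r s).intervalIntegrable _ _))]
  calc (∫ u in (0:ℝ)..1, u * γ (x * u))
      = (∑ j, ∑ k, ∑ r, ∑ s, ∫ u in (0:ℝ)..1, F j k r s u) / D := by
        simp only [hrw]
        rw [intervalIntegral.integral_div, hswap]
    _ ≤ (∑ j, ∑ k, ∑ r, ∑ s, 1/2 * (if j ≠ k ∧ r ≠ s then
          (b j k r s) ^ 2 * min 1 |2 * x / 3 * b j k r s| else 0)) / D := by
        rw [div_le_div_iff_of_pos_right hD]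
        refine Finset.sum_le_sum fun j _ => Finset.sum_le_sum fun k _ =>
          Finset.sum_le_sum fun r _ => Finset.sum_le_sum fun s _ => hterm j k r s
    _ = 1 / 2 * γ (2 * x / 3) := by
        rw [hγ]
        rw [← mul_div_assoc]
        congr 1
        simp only [← Finset.mul_sum]
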